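/- arXiv:1903.07041 — 3 statements merged into one kernel-verified Lean document; each statement's English description precedes it below -/
import Mathlib

section
/- Fix positive weights w_1,…,w_ℓ > 0. If x̄ ∈ X solves all ℓ weighted-constraint subproblems simultaneously, i.e., for each k ∈ {1,…,ℓ}, x̄ minimizes f_k(x) over the set {x ∈ X : w_i f_i(x) ≤ w_k f_k(x) for all i ≠ k}, then x̄ is a weakly efficient point of the multi-objective problem (f_1,…,f_ℓ) on X. -/
/-- If xbar solves all ℓ weighted-constraint subproblems simultaneously then it is
weakly efficient. -/
theorem stmt_2 {σ : Type*} {ℓ : ℕ} (hl : 0 < ℓ) (X : Set σ)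
    (f : Fin ℓ → σ → ℝ) (hpos : ∀ x ∈ X, ∀ i, 0 < f i x)
    (w : Fin ℓ → ℝ) (hw : ∀ i, 0 < w i) (hsum : ∑ i, w i = 1)
    (xbar : σ) (hxbar : xbar ∈ X)
    (hfeas : ∀ k : Fin ℓ, ∀ i : Fin ℓ, i ≠ k → w i * f i xbar ≤ w k * f k xbar)
    (hopt : ∀ k : Fin ℓ, ∀ x ∈ X,
      (∀ i : Fin ℓ, i ≠ k → w i * f i x ≤ w k * f k x) → f k xbar ≤ f k x) :
    ¬ ∃ x ∈ X, ∀ i, f i x < f i xbar := by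
  rintro ⟨x, hxX, hdom⟩
  haveI : NeZero ℓ := ⟨hl.ne'⟩
  obtain ⟨k, hk⟩ := Finite.exists_max (fun i : Fin ℓ => w i * f i x)
  have := hopt k x hxX (fun i _ => hk i)
  exact absurd (hdom k) (not_lt.2 this)
end

section
/- (Removal of dominated points, Proposition 3.3) Fix positive weights w with Σ w_i = 1 and suppose each weighted-constraint subproblem (P_w^j), j = 1,…,ℓ, has a nonempty solution set S_w^j. Suppose for some k there exists x̄_k ∈ S_w^k such that for every r ≠ k there exists x̄_r ∈ S_w^r with f_r(x̄_r) ≥ f_r(x̄_k). Then x̄_k is a weakly efficient point of the multi-objective problem. -/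
/-- The solution set of the k-th weighted-constraint subproblem (P_w^k). -/
def SolWC {σ : Type*} {ℓ : ℕ} (X : Set σ) (f : Fin ℓ → σ → ℝ)
    (w : Fin ℓ → ℝ) (k : Fin ℓ) (x : σ) : Prop :=
  x ∈ X ∧ (∀ i : Fin ℓ, i ≠ k → w i * f i x ≤ w k * f k x) ∧
    ∀ y ∈ X, (∀ i : Fin ℓ, i ≠ k → w i * f i y ≤ w k * f k y) → f k x ≤ f k y

/-- Removal of dominated points (Proposition 3.3). -/
theorem stmt_3 {σ : Type*} {ℓ : ℕ} (X : Set σ) (f : Fin ℓ → σ → ℝ)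
    (hpos : ∀ x ∈ X, ∀ i, 0 < f i x)
    (w : Fin ℓ → ℝ) (hw : ∀ i, 0 < w i) (hsum : ∑ i, w i = 1)
    (hS : ∀ j : Fin ℓ, ∃ x, SolWC X f w j x)
    (k : Fin ℓ) (xbark : σ) (hxbark : SolWC X f w k xbark)
    (hdom : ∀ r : Fin ℓ, r ≠ k → ∃ xbarr, SolWC X f w r xbarr ∧ f r xbark ≤ f r xbarr) :
    ¬ ∃ x ∈ X, ∀ i, f i x < f i xbark := by
  rintro ⟨x, hxX, hlt⟩
  obtain ⟨m, -, hm⟩ := Finset.exists_max_image Finset.univ (fun i => w i * f i x)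
    ⟨k, Finset.mem_univ k⟩
  have hfeas : ∀ i : Fin ℓ, i ≠ m → w i * f i x ≤ w m * f m x := fun i _ =>
    hm i (Finset.mem_univ i)
  by_cases hmk : m = k
  · subst hmk
    have := hxbark.2.2 x hxX hfeas
    exact absurd (hlt m) (not_lt.mpr this)
  · obtain ⟨xr, hxr, hge⟩ := hdom m hmk
    have h1 : f m xr ≤ f m x := hxr.2.2 x hxX hfeas
    linarith [hlt m]
end

section
/- (Two-objective dominance elimination correctness) Let x̄₁ solve (P_w^1) and x̄₂ solve (P_w^2) for the same positive weights w = (w₁, w₂). If f₂(x̄₂) ≥ f₂(x̄₁), then x̄₁ is weakly efficient for the bi-objective problem (f₁, f₂) on X; symmetrically, if f₁(x̄₁) ≥ f₁(x̄₂), then x̄₂ is weakly efficient. -/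
/-- Two-objective dominance elimination correctness. -/
theorem stmt_14 {σ : Type*} (X : Set σ) (f₁ f₂ : σ → ℝ)
    (hpos : ∀ x ∈ X, 0 < f₁ x ∧ 0 < f₂ x)
    (w₁ w₂ : ℝ) (hw₁ : 0 < w₁) (hw₂ : 0 < w₂)
    (xbar1 xbar2 : σ) (hxbar1 : xbar1 ∈ X) (hxbar2 : xbar2 ∈ X)
    (hfeas₁ : w₂ * f₂ xbar1 ≤ w₁ * f₁ xbar1)
    (hopt₁ : ∀ x ∈ X, w₂ * f₂ x ≤ w₁ * f₁ x → f₁ xbar1 ≤ f₁ x)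
    (hfeas₂ : w₁ * f₁ xbar2 ≤ w₂ * f₂ xbar2)
    (hopt₂ : ∀ x ∈ X, w₁ * f₁ x ≤ w₂ * f₂ x → f₂ xbar2 ≤ f₂ x) :
    (f₂ xbar1 ≤ f₂ xbar2 → ¬ ∃ x ∈ X, f₁ x < f₁ xbar1 ∧ f₂ x < f₂ xbar1) ∧
    (f₁ xbar2 ≤ f₁ xbar1 → ¬ ∃ x ∈ X, f₁ x < f₁ xbar2 ∧ f₂ x < f₂ xbar2) := by
  constructor
  · rintro h ⟨x, hx, h1, h2⟩
    rcases le_total (w₂ * f₂ x) (w₁ * f₁ x) with hc | hc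
    · exact absurd (hopt₁ x hx hc) (not_le.2 h1)
    · exact absurd (hopt₂ x hx hc) (not_le.2 (h2.trans_le h))
  · rintro h ⟨x, hx, h1, h2⟩
    rcases le_total (w₁ * f₁ x) (w₂ * f₂ x) with hc | hc
    · exact absurd (hopt₂ x hx hc) (not_le.2 h2)
    · exact absurd (hopt₁ x hx hc) (not_le.2 (h1.trans_le h))
end
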